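/- arXiv:2512.05286 — 5 statements merged into one kernel-verified Lean document; each statement's English description precedes it below -/
import Mathlib

section
/- For any matrix A of rank r with singular values σ₁ ≥ ... ≥ σ_r and truncated SVD A_k, the Frobenius norm error satisfies ‖A − A_k‖_F = (Σ_{j=k+1}^r σ_j²)^{1/2}, and this is minimal among all matrices of rank at most k (Eckart–Young theorem, Frobenius norm case). -/
open Matrix

noncomputable def frobNorm {m n : ℕ} (A : Matrix (Fin m) (Fin n) ℂ) : ℝ :=
  Real.sqrt (∑ i, ∑ j, ‖A i j‖ ^ 2)

noncomputable def fsq {m n : ℕ} (A : Matrix (Fin m) (Fin n) ℂ) : ℝ :=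
  ∑ i, ∑ j, ‖A i j‖ ^ 2

lemma fsq_nonneg {m n : ℕ} (A : Matrix (Fin m) (Fin n) ℂ) : 0 ≤ fsq A := by
  apply Finset.sum_nonneg; intro i _; apply Finset.sum_nonneg; intro j _; positivity

lemma fsq_eq_retrace {m n : ℕ} (A : Matrix (Fin m) (Fin n) ℂ) :
    fsq A = (Matrix.trace (Aᴴ * A)).re := by
  simp only [Matrix.trace, Matrix.diag, Matrix.mul_apply, Matrix.conjTranspose_apply,
    Complex.re_sum]
  rw [Finset.sum_comm]
  apply Finset.sum_congr rfl; intro i _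
  apply Finset.sum_congr rfl; intro j _
  rw [show (star (A i j)) = (starRingEnd ℂ) (A i j) from rfl, mul_comm, Complex.mul_conj]
  simp [Complex.sq_norm]

lemma one_sub_proj {m : ℕ} (Q : Matrix (Fin m) (Fin m) ℂ) (hQh : Qᴴ = Q)
    (hQi : Q * Q = Q) : (1 - Q)ᴴ * (1 - Q) = 1 - Q := by
  rw [conjTranspose_sub, conjTranspose_one, hQh, Matrix.sub_mul, Matrix.mul_sub,
    Matrix.mul_sub, hQi]
  simp

lemma conjT_sq {m n : ℕ} (Q : Matrix (Fin m) (Fin m) ℂ) (hQh : Qᴴ = Q)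
    (hQi : Q * Q = Q) (A : Matrix (Fin m) (Fin n) ℂ) :
    (Q * A)ᴴ * (Q * A) = Aᴴ * (Q * A) := by
  rw [conjTranspose_mul, Matrix.mul_assoc, ← Matrix.mul_assoc Qᴴ, hQh, hQi]

lemma fsq_proj_split {m n : ℕ} (Q : Matrix (Fin m) (Fin m) ℂ) (hQh : Qᴴ = Q)
    (hQi : Q * Q = Q) (A : Matrix (Fin m) (Fin n) ℂ) :
    fsq A = fsq (Q * A) + fsq ((1 - Q) * A) := by
  rw [fsq_eq_retrace, fsq_eq_retrace, fsq_eq_retrace, ← Complex.add_re, ← Matrix.trace_add]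
  congr 2
  have h1 : (Q * A)ᴴ * (Q * A) = Aᴴ * (Q * A) := conjT_sq Q hQh hQi A
  have h3 : (1 - Q)ᴴ * (1 - Q) = 1 - Q := one_sub_proj Q hQh hQi
  have h2 : ((1 - Q) * A)ᴴ * ((1 - Q) * A) = Aᴴ * ((1 - Q) * A) := by
    rw [conjTranspose_mul, Matrix.mul_assoc, ← Matrix.mul_assoc (1 - Q)ᴴ, h3]
  rw [h1, h2, ← Matrix.mul_add, ← Matrix.add_mul]
  simp

lemma fsq_udv {m n r : ℕ} (U : Matrix (Fin m) (Fin r) ℂ) (V : Matrix (Fin n) (Fin r) ℂ)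
    (hU : Uᴴ * U = 1) (hV : Vᴴ * V = 1) (d : Fin r → ℂ) :
    fsq (U * Matrix.diagonal d * Vᴴ) = ∑ i, ‖d i‖ ^ 2 := by
  rw [fsq_eq_retrace]
  have key : (U * Matrix.diagonal d * Vᴴ)ᴴ * (U * Matrix.diagonal d * Vᴴ)
      = V * ((Matrix.diagonal d)ᴴ * (Matrix.diagonal d * Vᴴ)) := by
    simp only [conjTranspose_mul, conjTranspose_conjTranspose, Matrix.mul_assoc]
    rw [← Matrix.mul_assoc Uᴴ U, hU, Matrix.one_mul]
  rw [key, Matrix.trace_mul_comm, Matrix.mul_assoc, Matrix.mul_assoc, hV, Matrix.mul_one,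
    Matrix.diagonal_conjTranspose, Matrix.diagonal_mul_diagonal, Matrix.trace_diagonal]
  simp only [Pi.star_apply, Complex.re_sum]
  apply Finset.sum_congr rfl; intro i _
  rw [show (star (d i)) = (starRingEnd ℂ) (d i) from rfl, mul_comm, Complex.mul_conj]
  simp [Complex.sq_norm]

lemma exists_onb_matrix {m n kk : ℕ} (B : Matrix (Fin m) (Fin n) ℂ) (hB : B.rank ≤ kk) :
    ∃ (s : ℕ) (W : Matrix (Fin m) (Fin s) ℂ), s ≤ kk ∧ Wᴴ * W = 1 ∧ W * (Wᴴ * B) = B := by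
  classical
  let e : (Fin m → ℂ) ≃ₗ[ℂ] EuclideanSpace ℂ (Fin m) :=
    (WithLp.linearEquiv 2 ℂ (Fin m → ℂ)).symm
  let S : Submodule ℂ (EuclideanSpace ℂ (Fin m)) :=
    (LinearMap.range B.mulVecLin).map (e : (Fin m → ℂ) →ₗ[ℂ] EuclideanSpace ℂ (Fin m))
  have hfr : Module.finrank ℂ S = B.rank := LinearEquiv.finrank_map_eq e _
  set s := Module.finrank ℂ S with hsdef
  refine ⟨s, ?_⟩
  let b := stdOrthonormalBasis ℂ S
  let W : Matrix (Fin m) (Fin s) ℂ := Matrix.of fun i l => (↑(b l) : EuclideanSpace ℂ (Fin m)) i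
  refine ⟨W, by omega, ?_, ?_⟩
  · ext i j
    have h := orthonormal_iff_ite.mp b.orthonormal i j
    rw [Submodule.coe_inner, PiLp.inner_apply] at h
    simp only [RCLike.inner_apply] at h
    simpa [Matrix.mul_apply, Matrix.one_apply, W, mul_comm] using h
  · ext i j
    have hcol : (fun p => B p j) ∈ LinearMap.range B.mulVecLin := by
      refine ⟨Pi.single j 1, ?_⟩
      funext p
      simp [Matrix.mulVecLin, Matrix.mulVec, dotProduct, Pi.single_apply]
    let x : S := ⟨e (fun p => B p j), Submodule.mem_map_of_mem hcol⟩
    have hrepr := b.sum_repr x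
    have h2 : (↑(∑ l, b.repr x l • b l) : EuclideanSpace ℂ (Fin m)) = ↑x :=
      congrArg Subtype.val hrepr
    rw [AddSubmonoidClass.coe_finset_sum] at h2
    simp only [SetLike.val_smul] at h2
    have h4 := congrArg e.symm h2
    rw [map_sum] at h4
    simp only [_root_.map_smul] at h4
    have h5 := congrFun h4 i
    simp only [Finset.sum_apply, Pi.smul_apply, smul_eq_mul] at h5
    have hx : (e.symm (↑x : EuclideanSpace ℂ (Fin m))) i = B i j := rfl
    have hW : ∀ l, (e.symm (↑(b l) : EuclideanSpace ℂ (Fin m))) i = W i l := fun l => rfl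
    have hc : ∀ l, b.repr x l = ∑ p, star (W p l) * B p j := by
      intro l
      rw [b.repr_apply_apply, Submodule.coe_inner, PiLp.inner_apply]
      simp only [RCLike.inner_apply]
      exact Finset.sum_congr rfl (fun p _ => mul_comm _ _)
    simp only [Matrix.mul_apply, Matrix.conjTranspose_apply]
    calc ∑ l, W i l * ∑ p, star (W p l) * B p j
        = ∑ l, b.repr x l * (e.symm (↑(b l) : EuclideanSpace ℂ (Fin m))) i := by
          apply Finset.sum_congr rfl; intro l _; rw [hc l, hW l]; ring
      _ = B i j := by rw [h5]; exact hx

lemma sum_range_ind (k r : ℕ) : ∑ x ∈ Finset.range r, (if x < k then (1:ℝ) else 0) = min k r := by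
  induction r with
  | zero => simp
  | succ rr ih =>
    rw [Finset.sum_range_succ, ih]
    rcases Nat.lt_or_ge rr k with h2 | h2
    · rw [if_pos h2, show k ⊓ rr = rr by omega, show k ⊓ (rr+1) = rr + 1 by omega]
      push_cast; ring
    · rw [if_neg (by omega), show k ⊓ (rr+1) = k ⊓ rr by omega, add_zero]

lemma trace_mul_diag {r : ℕ} (M : Matrix (Fin r) (Fin r) ℂ) (d : Fin r → ℂ) :
    Matrix.trace (M * Matrix.diagonal d) = ∑ i, M i i * d i := by
  simp [Matrix.trace, Matrix.diag, Matrix.mul_apply, Matrix.diagonal, Finset.sum_ite_eq,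
    mul_comm]

lemma diag_conjT_mul_re {a b : ℕ} (M : Matrix (Fin a) (Fin b) ℂ) (i : Fin b) :
    ((Mᴴ * M) i i).re = ∑ l, ‖M l i‖ ^ 2 := by
  simp only [Matrix.mul_apply, Matrix.conjTranspose_apply, Complex.re_sum]
  apply Finset.sum_congr rfl; intro l _
  rw [show (star (M l i)) = (starRingEnd ℂ) (M l i) from rfl, mul_comm, Complex.mul_conj]
  simp [Complex.sq_norm]

lemma rearrange {r k : ℕ} (σ t : Fin r → ℝ)
    (hσpos : ∀ i, 0 < σ i) (hσmono : ∀ i j : Fin r, i ≤ j → σ j ≤ σ i)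
    (ht0 : ∀ i, 0 ≤ t i) (ht1 : ∀ i, t i ≤ 1) (hts : ∑ i, t i ≤ (k : ℝ)) :
    ∑ i, σ i ^ 2 * t i ≤ ∑ i, if i.val < k then σ i ^ 2 else 0 := by
  by_cases hkr : k < r
  · set c : ℝ := σ ⟨k, hkr⟩ ^ 2 with hc
    have hc0 : 0 ≤ c := by positivity
    have key : ∀ i : Fin r, σ i ^ 2 * t i - (if i.val < k then σ i ^ 2 else 0)
        ≤ c * (t i - if i.val < k then 1 else 0) := by
      intro i
      by_cases hik : i.val < k
      · simp only [hik, if_pos]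
        have h1 : c ≤ σ i ^ 2 := by
          apply pow_le_pow_left₀ (le_of_lt (hσpos _)) _ 2
          exact hσmono i ⟨k, hkr⟩ (by simp [Fin.le_def]; omega)
        nlinarith [ht1 i, ht0 i]
      · simp only [hik, if_neg, not_false_iff]
        have h1 : σ i ^ 2 ≤ c := by
          apply pow_le_pow_left₀ (le_of_lt (hσpos _)) _ 2
          exact hσmono ⟨k, hkr⟩ i (by simp [Fin.le_def]; omega)
        nlinarith [ht0 i]
    have hsum := Finset.sum_le_sum (fun i (_ : i ∈ Finset.univ) => key i)
    rw [Finset.sum_sub_distrib, ← Finset.mul_sum, Finset.sum_sub_distrib] at hsum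
    have hcount : ∑ i : Fin r, (if i.val < k then (1:ℝ) else 0) = k := by
      rw [Fin.sum_univ_eq_sum_range (fun x : ℕ => if x < k then (1:ℝ) else 0) r, sum_range_ind]
      congr 1; omega
    rw [hcount] at hsum
    nlinarith [hsum, mul_nonneg hc0 (sub_nonneg.mpr hts)]
  · push_neg at hkr
    apply Finset.sum_le_sum
    intro i _
    have hik : i.val < k := lt_of_lt_of_le i.isLt hkr
    simp only [hik, if_pos]
    nlinarith [ht1 i, ht0 i, sq_nonneg (σ i), hσpos i]

/-- Eckart–Young theorem, Frobenius norm case. -/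
theorem eckart_young_frobenius {m n r k : ℕ}
    (A Ak : Matrix (Fin m) (Fin n) ℂ)
    (U : Matrix (Fin m) (Fin r) ℂ) (V : Matrix (Fin n) (Fin r) ℂ)
    (σ : Fin r → ℝ)
    (hU : Uᴴ * U = 1) (hV : Vᴴ * V = 1)
    (hσpos : ∀ i, 0 < σ i)
    (hσmono : ∀ i j : Fin r, i ≤ j → σ j ≤ σ i)
    (hA : A = U * Matrix.diagonal (fun i => (σ i : ℂ)) * Vᴴ)
    (hrank : A.rank = r)
    (hAk : Ak = U * Matrix.diagonal (fun i : Fin r => if i.val < k then (σ i : ℂ) else 0) * Vᴴ) :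
    frobNorm (A - Ak) = Real.sqrt (∑ j : Fin r, if k ≤ j.val then σ j ^ 2 else 0) ∧
      ∀ B : Matrix (Fin m) (Fin n) ℂ, B.rank ≤ k →
        frobNorm (A - Ak) ≤ frobNorm (A - B) := by
  have hfrob : ∀ X : Matrix (Fin m) (Fin n) ℂ, frobNorm X = Real.sqrt (fsq X) := fun X => rfl
  have hdiff : A - Ak
      = U * Matrix.diagonal (fun i : Fin r => if i.val < k then 0 else (σ i : ℂ)) * Vᴴ := by
    rw [hA, hAk, ← Matrix.sub_mul, ← Matrix.mul_sub, Matrix.diagonal_sub,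
      show (fun i : Fin r => (σ i : ℂ) - if i.val < k then (σ i : ℂ) else 0)
        = (fun i : Fin r => if i.val < k then 0 else (σ i : ℂ)) from
        funext fun i => by by_cases h : i.val < k <;> simp [h]]
  have hfsq_diff : fsq (A - Ak) = ∑ j : Fin r, if k ≤ j.val then σ j ^ 2 else 0 := by
    rw [hdiff, fsq_udv U V hU hV]
    apply Finset.sum_congr rfl; intro i _
    by_cases h : i.val < k
    · simp [h, Nat.not_le.mpr h]
    · have hk : k ≤ i.val := Nat.le_of_not_lt h
      simp [h, hk, Complex.norm_real, Real.norm_eq_abs, sq_abs]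
  refine ⟨by rw [hfrob, hfsq_diff], ?_⟩
  intro B hB
  obtain ⟨s, W, hsk, hWW, hWB⟩ := exists_onb_matrix B hB
  obtain ⟨Q, hQdef⟩ : ∃ Q, Q = W * Wᴴ := ⟨_, rfl⟩
  have hQh : Qᴴ = Q := by rw [hQdef, conjTranspose_mul, conjTranspose_conjTranspose]
  have hQi : Q * Q = Q := by
    rw [hQdef, Matrix.mul_assoc, ← Matrix.mul_assoc Wᴴ W Wᴴ, hWW, Matrix.one_mul]
  have hQB : Q * B = B := by rw [hQdef, Matrix.mul_assoc, hWB]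
  have hdd : (Matrix.diagonal fun i => (σ i : ℂ)) * (Matrix.diagonal fun i => (σ i : ℂ))ᴴ
      = Matrix.diagonal fun i => ((σ i ^ 2 : ℝ) : ℂ) := by
    rw [Matrix.diagonal_conjTranspose, Matrix.diagonal_mul_diagonal]
    congr 1; funext i
    simp only [Pi.star_apply, Complex.star_def, Complex.conj_ofReal]
    push_cast; ring
  have hAAH : A * Aᴴ = U * Matrix.diagonal (fun i => ((σ i ^ 2 : ℝ) : ℂ)) * Uᴴ := by
    rw [hA]
    simp only [conjTranspose_mul, conjTranspose_conjTranspose, Matrix.mul_assoc]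
    rw [← Matrix.mul_assoc Vᴴ V, hV, Matrix.one_mul,
      ← Matrix.mul_assoc (Matrix.diagonal fun i => ((σ i : ℝ) : ℂ)), hdd]
  obtain ⟨t, htdef⟩ : ∃ t : Fin r → ℝ, t = fun i => ((Uᴴ * (Q * U)) i i).re := ⟨_, rfl⟩
  have ht : ∀ i, t i = ((Uᴴ * (Q * U)) i i).re := fun i => by rw [htdef]
  have hQA : fsq (Q * A) = ∑ i, σ i ^ 2 * t i := by
    rw [fsq_eq_retrace, conjT_sq Q hQh hQi A, Matrix.trace_mul_comm Aᴴ (Q * A),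
      Matrix.mul_assoc, hAAH]
    have assoc1 : Q * ((U * Matrix.diagonal (fun i => ((σ i ^ 2 : ℝ) : ℂ))) * Uᴴ)
        = (Q * (U * Matrix.diagonal fun i => ((σ i ^ 2 : ℝ) : ℂ))) * Uᴴ := by
      simp only [Matrix.mul_assoc]
    rw [assoc1, Matrix.trace_mul_comm]
    have assoc2 : Uᴴ * (Q * (U * Matrix.diagonal fun i => ((σ i ^ 2 : ℝ) : ℂ)))
        = (Uᴴ * (Q * U)) * Matrix.diagonal fun i => ((σ i ^ 2 : ℝ) : ℂ) := by
      simp only [Matrix.mul_assoc]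
    rw [assoc2, trace_mul_diag, Complex.re_sum]
    apply Finset.sum_congr rfl; intro i _
    rw [Complex.mul_re, ht i]
    simp only [Complex.ofReal_re, Complex.ofReal_im, mul_zero, sub_zero]
    ring
  have hCt : Uᴴ * (Q * U) = (Wᴴ * U)ᴴ * (Wᴴ * U) := by
    rw [conjTranspose_mul, conjTranspose_conjTranspose, hQdef]
    simp only [Matrix.mul_assoc]
  have ht0 : ∀ i, 0 ≤ t i := by
    intro i
    rw [ht i, hCt, diag_conjT_mul_re]
    apply Finset.sum_nonneg; intro l _; positivity
  have ht1 : ∀ i, t i ≤ 1 := by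
    intro i
    have h1 : Uᴴ * ((1 - Q) * U) = ((1 - Q) * U)ᴴ * ((1 - Q) * U) := by
      symm
      rw [conjTranspose_mul, Matrix.mul_assoc, ← Matrix.mul_assoc (1 - Q)ᴴ,
        one_sub_proj Q hQh hQi]
    have h2 : Uᴴ * ((1 - Q) * U) = 1 - Uᴴ * (Q * U) := by
      rw [Matrix.sub_mul, Matrix.one_mul, Matrix.mul_sub, hU]
    have h3 : ((Uᴴ * ((1 - Q) * U) : Matrix (Fin r) (Fin r) ℂ) i i).re = 1 - t i := by
      rw [h2, ht i]
      simp [Matrix.sub_apply, Matrix.one_apply]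
    have h4 : 0 ≤ ((Uᴴ * ((1 - Q) * U) : Matrix (Fin r) (Fin r) ℂ) i i).re := by
      rw [h1, diag_conjT_mul_re]
      apply Finset.sum_nonneg; intro l _; positivity
    rw [h3] at h4
    linarith
  have hts : ∑ i, t i ≤ (k : ℝ) := by
    have htr : ∑ i, t i = (Matrix.trace (Uᴴ * (Q * U))).re := by
      rw [Matrix.trace]
      simp only [Matrix.diag, Complex.re_sum]
      exact Finset.sum_congr rfl (fun i _ => ht i)
    have hcyc : Matrix.trace (Uᴴ * (Q * U)) = Matrix.trace (Wᴴ * (U * (Uᴴ * W))) := by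
      rw [Matrix.trace_mul_comm Uᴴ (Q * U), hQdef]
      rw [show W * Wᴴ * U * Uᴴ = W * (Wᴴ * (U * Uᴴ)) by simp only [Matrix.mul_assoc]]
      rw [Matrix.trace_mul_comm W (Wᴴ * (U * Uᴴ))]
      simp only [Matrix.mul_assoc]
    have hUUh : (1 - U * Uᴴ)ᴴ * (1 - U * Uᴴ) = 1 - U * Uᴴ := by
      apply one_sub_proj
      · rw [conjTranspose_mul, conjTranspose_conjTranspose]
      · rw [Matrix.mul_assoc, ← Matrix.mul_assoc Uᴴ U Uᴴ, hU, Matrix.one_mul]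
    have h5 : Wᴴ * ((1 - U * Uᴴ) * W) = ((1 - U * Uᴴ) * W)ᴴ * ((1 - U * Uᴴ) * W) := by
      symm
      rw [conjTranspose_mul, Matrix.mul_assoc, ← Matrix.mul_assoc (1 - U * Uᴴ)ᴴ, hUUh]
    have h6 : Wᴴ * ((1 - U * Uᴴ) * W) = 1 - Wᴴ * (U * (Uᴴ * W)) := by
      rw [Matrix.sub_mul, Matrix.one_mul, Matrix.mul_sub, hWW]
      simp only [Matrix.mul_assoc]
    have h7 : 0 ≤ (Matrix.trace (Wᴴ * ((1 - U * Uᴴ) * W))).re := by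
      rw [h5]
      simp only [Matrix.trace, Matrix.diag, Complex.re_sum]
      apply Finset.sum_nonneg; intro i _
      rw [diag_conjT_mul_re]
      apply Finset.sum_nonneg; intro l _; positivity
    have h8 : (Matrix.trace (Wᴴ * ((1 - U * Uᴴ) * W))).re
        = (s : ℝ) - (Matrix.trace (Wᴴ * (U * (Uᴴ * W)))).re := by
      rw [h6, Matrix.trace_sub, Complex.sub_re, Matrix.trace_one]
      simp
    rw [h8] at h7
    rw [htr, hcyc]
    have hsr : (s : ℝ) ≤ (k : ℝ) := by exact_mod_cast hsk
    linarith
  have hfsqA : fsq A = ∑ i, σ i ^ 2 := by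
    rw [hA, fsq_udv U V hU hV]
    apply Finset.sum_congr rfl; intro i _
    simp [Complex.norm_real, Real.norm_eq_abs, sq_abs]
  have hz : (1 - Q) * B = 0 := by rw [Matrix.sub_mul, Matrix.one_mul, hQB, sub_self]
  have h1 : (1 - Q) * (A - B) = (1 - Q) * A := by rw [Matrix.mul_sub, hz, sub_zero]
  have split1 := fsq_proj_split Q hQh hQi (A - B)
  have split2 := fsq_proj_split Q hQh hQi A
  have hmain : fsq (A - Ak) ≤ fsq (A - B) := by
    have step1 : fsq ((1 - Q) * A) ≤ fsq (A - B) := by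
      rw [← h1]
      have := fsq_nonneg (Q * (A - B))
      linarith [split1]
    have step2 : fsq (A - Ak) ≤ fsq ((1 - Q) * A) := by
      have e1 : fsq ((1 - Q) * A) = fsq A - fsq (Q * A) := by linarith [split2]
      rw [e1, hfsqA, hQA, hfsq_diff]
      have hre := rearrange σ t hσpos hσmono ht0 ht1 hts
      have hsplit : ∑ j : Fin r, (if k ≤ j.val then σ j ^ 2 else 0)
          = ∑ i, σ i ^ 2 - ∑ i, (if i.val < k then σ i ^ 2 else 0) := by
        rw [← Finset.sum_sub_distrib]
        apply Finset.sum_congr rfl; intro i _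
        by_cases h : i.val < k
        · simp [h, Nat.not_le.mpr h]
        · simp [h, Nat.le_of_not_lt h]
      rw [hsplit]
      linarith
    linarith
  rw [hfrob, hfrob]
  exact Real.sqrt_le_sqrt hmain
end

section
/- Let A ∈ ℂ^{m×n}, let C = A(:,J) consist of k linearly independent columns and R = A(I,:) consist of k linearly independent rows, and suppose rank(A) = k. Then A = C U R with U = C† A R†, where † denotes the Moore–Penrose pseudoinverse. -/
open Matrix

/-- B is the Moore–Penrose pseudoinverse of A (the four Penrose conditions). -/
def IsMoorePenrose {m n : ℕ} (A : Matrix (Fin m) (Fin n) ℂ)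
    (B : Matrix (Fin n) (Fin m) ℂ) : Prop :=
  A * B * A = A ∧ B * A * B = B ∧ (A * B)ᴴ = A * B ∧ (B * A)ᴴ = B * A

/-- If C consists of columns of A and has the same rank, then A factors through C. -/
lemma cols_factor {m n k : ℕ} (A : Matrix (Fin m) (Fin n) ℂ) (J : Fin k → Fin n)
    (C : Matrix (Fin m) (Fin k) ℂ) (hC : C = A.submatrix id J)
    (hrank : A.rank = k) (hCrank : C.rank = k) :
    ∃ X : Matrix (Fin k) (Fin n) ℂ, A = C * X := by
  have hle : LinearMap.range C.mulVecLin ≤ LinearMap.range A.mulVecLin := by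
    rintro y ⟨v, rfl⟩
    refine ⟨∑ i, Pi.single (J i) (v i), ?_⟩
    simp only [mulVecLin_apply]
    rw [show A.mulVec (∑ i, Pi.single (J i) (v i)) =
        ∑ i, A.mulVec (Pi.single (J i) (v i)) from map_sum A.mulVecLin _ _]
    funext r
    simp [mulVec_single, hC, mulVec, dotProduct, submatrix, mul_comm]
  have heq : LinearMap.range C.mulVecLin = LinearMap.range A.mulVecLin :=
    Submodule.eq_of_le_of_finrank_eq hle (by
      change C.rank = A.rank
      rw [hrank, hCrank])
  have hcol : ∀ j : Fin n, ∃ x : Fin k → ℂ, C.mulVec x = fun r => A r j := by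
    intro j
    have : (fun r => A r j) ∈ LinearMap.range A.mulVecLin := by
      refine ⟨Pi.single j 1, ?_⟩
      funext r
      simp [mulVec_single]
    rw [← heq] at this
    exact this
  choose x hx using hcol
  refine ⟨Matrix.of fun i j => x j i, ?_⟩
  funext r j
  have := congrFun (hx j) r
  simpa [Matrix.mul_apply, mulVec, dotProduct] using this.symm

/-- CUR decomposition of a rank-k matrix: A = C U R with U = C† A R†. -/
theorem CUR_exact {m n k : ℕ}
    (A : Matrix (Fin m) (Fin n) ℂ) (I : Fin k → Fin m) (J : Fin k → Fin n)
    (hrank : A.rank = k)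
    (C : Matrix (Fin m) (Fin k) ℂ) (hC : C = A.submatrix id J)
    (R : Matrix (Fin k) (Fin n) ℂ) (hR : R = A.submatrix I id)
    (hCrank : C.rank = k) (hRrank : R.rank = k)
    (Cd : Matrix (Fin k) (Fin m) ℂ) (hCd : IsMoorePenrose C Cd)
    (Rd : Matrix (Fin n) (Fin k) ℂ) (hRd : IsMoorePenrose R Rd) :
    A = C * (Cd * A * Rd) * R := by
  obtain ⟨X, hX⟩ := cols_factor A J C hC hrank hCrank
  obtain ⟨Y, hY⟩ := cols_factor Aᵀ I Rᵀ (by rw [hR]; rfl)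
    (by rw [rank_transpose, hrank]) (by rw [rank_transpose, hRrank])
  have hYA : A = Yᵀ * R := by
    have := congrArg Matrix.transpose hY
    rwa [transpose_transpose, transpose_mul] at this
  have h1 : C * Cd * A = A := by
    conv_lhs => rw [hX]
    rw [← Matrix.mul_assoc, hCd.1, ← hX]
  have h2 : A * Rd * R = A := by
    conv_lhs => rw [hYA]
    rw [Matrix.mul_assoc, Matrix.mul_assoc, ← Matrix.mul_assoc R Rd R, hRd.1, ← hYA]

  calc A = A * Rd * R := h2.symm
    _ = (C * Cd * A) * Rd * R := by rw [h1]
    _ = C * (Cd * A * Rd) * R := by simp only [Matrix.mul_assoc]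
end

section
/- Let A ∈ ℝ^{m×n} with m ≥ n, b ∈ ℝ^m, and let Γ ∈ ℝ^{d×m} satisfy the subspace embedding property (1−ε)‖v‖ ≤ ‖Γv‖ ≤ (1+ε)‖v‖ for every vector v in the column space of [A b], where 0 < ε < 1. If x* minimizes ‖Ax − b‖₂ and x̂ minimizes ‖Γ(Ax − b)‖₂, then ‖A x̂ − b‖₂ ≤ ((1+ε)/(1−ε))·‖A x* − b‖₂. -/
open Matrix

noncomputable def l2 {m : ℕ} (v : Fin m → ℝ) : ℝ := Real.sqrt (∑ i, v i ^ 2)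

/-- Sketch-and-solve guarantee for overdetermined least squares. -/
theorem sketch_and_solve {m n d : ℕ} (hmn : n ≤ m)
    (A : Matrix (Fin m) (Fin n) ℝ) (b : Fin m → ℝ)
    (Γ : Matrix (Fin d) (Fin m) ℝ) (ε : ℝ) (hε0 : 0 < ε) (hε1 : ε < 1)
    (hemb : ∀ (x : Fin n → ℝ) (c : ℝ),
      (1 - ε) * l2 (A.mulVec x + c • b) ≤ l2 (Γ.mulVec (A.mulVec x + c • b)) ∧
      l2 (Γ.mulVec (A.mulVec x + c • b)) ≤ (1 + ε) * l2 (A.mulVec x + c • b))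
    (xstar xhat : Fin n → ℝ)
    (hxstar : ∀ x, l2 (A.mulVec xstar - b) ≤ l2 (A.mulVec x - b))
    (hxhat : ∀ x, l2 (Γ.mulVec (A.mulVec xhat - b)) ≤ l2 (Γ.mulVec (A.mulVec x - b))) :
    l2 (A.mulVec xhat - b) ≤ ((1 + ε) / (1 - ε)) * l2 (A.mulVec xstar - b) := by
  have key : ∀ x : Fin n → ℝ, A.mulVec x + (-1 : ℝ) • b = A.mulVec x - b := by
    intro x; simp [sub_eq_add_neg]
  have h1 := (hemb xhat (-1)).1
  have h2 := (hemb xstar (-1)).2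
  rw [key] at h1 h2
  have h3 := hxhat xstar
  have hpos : (0 : ℝ) < 1 - ε := by linarith
  rw [div_mul_eq_mul_div, le_div_iff₀ hpos]
  calc l2 (A.mulVec xhat - b) * (1 - ε) = (1 - ε) * l2 (A.mulVec xhat - b) := mul_comm _ _
    _ ≤ l2 (Γ.mulVec (A.mulVec xhat - b)) := h1
    _ ≤ l2 (Γ.mulVec (A.mulVec xstar - b)) := h3
    _ ≤ (1 + ε) * l2 (A.mulVec xstar - b) := h2
end

section
/- Let Z = A ⊙ B be the Khatri–Rao product of A ∈ ℂ^{I×R} and B ∈ ℂ^{J×R}, and let the row of Z indexed by the pair (i,j) be z_{(i,j)} = A(i,:) ∗ B(j,:). Then the leverage score of row (i,j) of Z is bounded by the product of the leverage scores of row i of A and row j of B: ℓ_{(i,j)}(Z) ≤ ℓ_i(A)·ℓ_j(B). -/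
open Matrix

/-- Columnwise Khatri–Rao product. -/
def khatriRao {I J K : ℕ} (A : Matrix (Fin I) (Fin K) ℂ)
    (B : Matrix (Fin J) (Fin K) ℂ) : Matrix (Fin I × Fin J) (Fin K) ℂ :=
  fun p k => A p.1 k * B p.2 k

/-- Leverage score of the i-th row of M: ℓ_i(M) = m_i* (M*M)⁻¹ m_i. -/
noncomputable def levScore {ι : Type*} [Fintype ι] {R : ℕ}
    (M : Matrix ι (Fin R) ℂ) (i : ι) : ℝ :=
  (star (M i) ⬝ᵥ ((Mᴴ * M)⁻¹).mulVec (M i)).re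

open scoped ComplexOrder

/-- A square matrix of full rank has invertible determinant. -/
lemma isUnit_det_of_rank_eq {R : ℕ} (M : Matrix (Fin R) (Fin R) ℂ)
    (h : M.rank = R) : IsUnit M.det := by
  rw [isUnit_iff_ne_zero]
  intro hdet
  obtain ⟨v, hv0, hv⟩ := (Matrix.exists_mulVec_eq_zero_iff).mpr hdet
  have h1 := LinearMap.finrank_range_add_finrank_ker (Matrix.mulVecLin M)
  have hker : 0 < Module.finrank ℂ (LinearMap.ker M.mulVecLin) := by
    rw [Module.finrank_pos_iff]
    exact ⟨⟨⟨v, by simpa using hv⟩, 0, by simpa using hv0⟩⟩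
  have hdom : Module.finrank ℂ (Fin R → ℂ) = R := by simp
  rw [hdom] at h1
  unfold Matrix.rank at h
  omega

/-- Cauchy–Schwarz for the complex dot product. -/
lemma dot_cs {n : Type*} [Fintype n] (x y : n → ℂ) :
    ‖star x ⬝ᵥ y‖ ^ 2 ≤ (star x ⬝ᵥ x).re * (star y ⬝ᵥ y).re := by
  let x' : EuclideanSpace ℂ n := (WithLp.equiv 2 _).symm x
  let y' : EuclideanSpace ℂ n := (WithLp.equiv 2 _).symm y
  have hinner : inner ℂ x' y' = star x ⬝ᵥ y := by rw [dotProduct_comm]; rfl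
  have hx : (star x ⬝ᵥ x).re = ‖x'‖ ^ 2 := by
    rw [← inner_self_eq_norm_sq (𝕜 := ℂ) x', show inner ℂ x' x' = star x ⬝ᵥ x by rw [dotProduct_comm]; rfl]
    simp [RCLike.re_to_complex]
  have hy : (star y ⬝ᵥ y).re = ‖y'‖ ^ 2 := by
    rw [← inner_self_eq_norm_sq (𝕜 := ℂ) y', show inner ℂ y' y' = star y ⬝ᵥ y by rw [dotProduct_comm]; rfl]
    simp [RCLike.re_to_complex]
  have := norm_inner_le_norm (𝕜 := ℂ) x' y'
  rw [hinner] at this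
  rw [hx, hy]
  calc ‖star x ⬝ᵥ y‖ ^ 2 = ‖star x ⬝ᵥ y‖ ^ 2 := rfl
    _ ≤ (‖x'‖ * ‖y'‖) ^ 2 := by
        apply pow_le_pow_left₀ (by positivity) this 2
    _ = ‖x'‖ ^ 2 * ‖y'‖ ^ 2 := by ring

/-- adjoint identity -/
lemma dot_adjoint {m n : Type*} [Fintype m] [Fintype n]
    (A : Matrix m n ℂ) (x : n → ℂ) (u : m → ℂ) :
    star x ⬝ᵥ (Aᴴ *ᵥ u) = star (A *ᵥ x) ⬝ᵥ u := by
  rw [Matrix.dotProduct_mulVec, Matrix.star_mulVec]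

lemma dot_self_re_nonneg {n : Type*} [Fintype n] (x : n → ℂ) :
    0 ≤ (star x ⬝ᵥ x).re := by
  simp only [dotProduct, Pi.star_apply, Complex.re_sum]
  apply Finset.sum_nonneg
  intro r _
  simp [Complex.mul_re, mul_self_nonneg]
  nlinarith [mul_self_nonneg (x r).re, mul_self_nonneg (x r).im]

section Core

variable {m : Type*} [Fintype m] {R : ℕ} (A : Matrix m (Fin R) ℂ)

lemma lev_eq (hdet : IsUnit (Aᴴ * A).det) (i : m) :
    (levScore A i : ℝ) =
      (star (A *ᵥ ((Aᴴ * A)⁻¹ *ᵥ A i)) ⬝ᵥ (A *ᵥ ((Aᴴ * A)⁻¹ *ᵥ A i))).re := by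
  set P := Aᴴ * A with hP
  set c := P⁻¹ *ᵥ A i with hc
  have hic : A i = P *ᵥ c := by
    rw [hc, Matrix.mulVec_mulVec, Matrix.mul_nonsing_inv _ hdet, Matrix.one_mulVec]
  have herm : Pᴴ = P := (Matrix.isHermitian_conjTranspose_mul_self A)
  have h2 : star (A *ᵥ c) ⬝ᵥ (A *ᵥ c) = star c ⬝ᵥ (P *ᵥ c) := by
    rw [← dot_adjoint, Matrix.mulVec_mulVec]
  rw [levScore, h2, ← hic]
  have : star c ⬝ᵥ A i = star (star (A i) ⬝ᵥ c) := Matrix.star_dotProduct _ _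
  rw [this]
  simp [hc, hP]

lemma lev_nonneg (hdet : IsUnit (Aᴴ * A).det) (i : m) : 0 ≤ levScore A i := by
  rw [lev_eq A hdet i]; exact dot_self_re_nonneg _

/-- Core Cauchy–Schwarz bound with leverage scores. -/
lemma lev_bound (hdet : IsUnit (Aᴴ * A).det) (i : m) (v : Fin R → ℂ) :
    ‖star (A i) ⬝ᵥ v‖ ^ 2 ≤
      levScore A i * (star (A *ᵥ v) ⬝ᵥ (A *ᵥ v)).re := by
  set P := Aᴴ * A with hP
  set c := P⁻¹ *ᵥ A i with hc
  have hic : A i = P *ᵥ c := by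
    rw [hc, Matrix.mulVec_mulVec, Matrix.mul_nonsing_inv _ hdet, Matrix.one_mulVec]
  have herm : Pᴴ = P := (Matrix.isHermitian_conjTranspose_mul_self A)
  have key : star (A i) ⬝ᵥ v = star (A *ᵥ c) ⬝ᵥ (A *ᵥ v) := by
    have h1 : star (A i) ⬝ᵥ v = star c ⬝ᵥ (P *ᵥ v) := by
      conv_lhs => rw [hic]
      rw [← dot_adjoint, herm]
    rw [h1, hP, ← Matrix.mulVec_mulVec, dot_adjoint]
  rw [key, lev_eq A hdet i]
  exact dot_cs _ _

end Core

/-- Leverage scores of the Khatri–Rao product are bounded by products of the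
    factor leverage scores. -/
theorem khatriRao_leverage_le {I J R : ℕ}
    (A : Matrix (Fin I) (Fin R) ℂ) (B : Matrix (Fin J) (Fin R) ℂ)
    (hA : A.rank = R) (hB : B.rank = R) (hZ : (khatriRao A B).rank = R)
    (i : Fin I) (j : Fin J) :
    levScore (khatriRao A B) (i, j) ≤ levScore A i * levScore B j := by
  set Z := khatriRao A B with hZdef
  have hdA : IsUnit (Aᴴ * A).det :=
    isUnit_det_of_rank_eq _ (by rw [Matrix.rank_conjTranspose_mul_self, hA])
  have hdB : IsUnit (Bᴴ * B).det :=
    isUnit_det_of_rank_eq _ (by rw [Matrix.rank_conjTranspose_mul_self, hB])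
  have hdZ : IsUnit (Zᴴ * Z).det :=
    isUnit_det_of_rank_eq _ (by rw [Matrix.rank_conjTranspose_mul_self, hZ])
  set M := Zᴴ * Z with hM
  set z := Z (i, j) with hz
  set y := M⁻¹ *ᵥ z with hy
  set ℓA := levScore A i
  set ℓB := levScore B j
  set ℓZ := levScore Z (i, j) with hℓZ
  have hℓZ' : ℓZ = (star z ⬝ᵥ y).re := rfl
  -- (Z *ᵥ y) dot itself equals ℓZ
  have hZy : (star (Z *ᵥ y) ⬝ᵥ (Z *ᵥ y)).re = ℓZ := by
    have h1 : star (Z *ᵥ y) ⬝ᵥ (Z *ᵥ y) = star y ⬝ᵥ (M *ᵥ y) := by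
      rw [← dot_adjoint, Matrix.mulVec_mulVec]
    have h2 : M *ᵥ y = z := by
      rw [hy, Matrix.mulVec_mulVec, Matrix.mul_nonsing_inv _ hdZ, Matrix.one_mulVec]
    rw [h1, h2, hℓZ', Matrix.star_dotProduct]
    simp
  have hℓZ_nonneg : 0 ≤ ℓZ := by rw [← hZy]; exact dot_self_re_nonneg _
  -- the key chain
  set v : Fin R → ℂ := fun r => star (B j r) * y r with hv
  have step0 : star z ⬝ᵥ y = star (A i) ⬝ᵥ v := by
    simp only [dotProduct, hv, hz, hZdef, khatriRao, Pi.star_apply]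
    congr 1; ext r
    rw [star_mul']; ring
  have step1 : ‖star z ⬝ᵥ y‖ ^ 2 ≤
      ℓA * (star (A *ᵥ v) ⬝ᵥ (A *ᵥ v)).re := by
    rw [step0]; exact lev_bound A hdA i v
  -- second stage
  have step2 : (star (A *ᵥ v) ⬝ᵥ (A *ᵥ v)).re ≤
      ℓB * (star (Z *ᵥ y) ⬝ᵥ (Z *ᵥ y)).re := by
    have hAv : ∀ i' : Fin I, (A *ᵥ v) i' = star (B j) ⬝ᵥ (fun r => A i' r * y r) := by
      intro i'
      simp only [Matrix.mulVec, dotProduct, hv, Pi.star_apply]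
      congr 1; ext r; ring
    have hsum : (star (A *ᵥ v) ⬝ᵥ (A *ᵥ v)).re =
        ∑ i' : Fin I, ‖(A *ᵥ v) i'‖ ^ 2 := by
      simp only [dotProduct, Pi.star_apply, Complex.re_sum]
      congr 1; ext i'
      rw [Complex.sq_norm, Complex.normSq_apply]
      simp [Complex.mul_re]
    have hterm : ∀ i' : Fin I, ‖(A *ᵥ v) i'‖ ^ 2 ≤
        ℓB * (star (B *ᵥ (fun r => A i' r * y r)) ⬝ᵥ (B *ᵥ (fun r => A i' r * y r))).re := by
      intro i'
      rw [hAv i']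
      exact lev_bound B hdB j _
    have hfinal : ∑ i' : Fin I,
        (star (B *ᵥ (fun r => A i' r * y r)) ⬝ᵥ (B *ᵥ (fun r => A i' r * y r))).re =
        (star (Z *ᵥ y) ⬝ᵥ (Z *ᵥ y)).re := by
      rw [show (star (Z *ᵥ y) ⬝ᵥ (Z *ᵥ y)).re
          = ∑ p : Fin I × Fin J,
            (star ((Z *ᵥ y) p) * (Z *ᵥ y) p).re by
        simp [dotProduct, Complex.re_sum]]
      rw [Fintype.sum_prod_type]
      congr 1; ext i'
      simp only [dotProduct, Pi.star_apply, Complex.re_sum]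
      congr 1; ext j'
      have : (Z *ᵥ y) (i', j') = (B *ᵥ (fun r => A i' r * y r)) j' := by
        simp only [Matrix.mulVec, dotProduct, hZdef, khatriRao]
        congr 1; ext r; ring
      rw [this]
    calc (star (A *ᵥ v) ⬝ᵥ (A *ᵥ v)).re
        = ∑ i' : Fin I, ‖(A *ᵥ v) i'‖ ^ 2 := hsum
      _ ≤ ∑ i' : Fin I, ℓB *
          (star (B *ᵥ (fun r => A i' r * y r)) ⬝ᵥ (B *ᵥ (fun r => A i' r * y r))).re :=
          Finset.sum_le_sum (fun i' _ => hterm i')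
      _ = ℓB * (star (Z *ᵥ y) ⬝ᵥ (Z *ᵥ y)).re := by
          rw [← Finset.mul_sum, hfinal]
  have hℓA_nonneg : 0 ≤ ℓA := lev_nonneg A hdA i
  have hℓB_nonneg : 0 ≤ ℓB := lev_nonneg B hdB j
  have main : ℓZ ^ 2 ≤ ℓA * ℓB * ℓZ := by
    have h1 : ℓZ ≤ ‖star z ⬝ᵥ y‖ := by
      rw [hℓZ']; exact Complex.re_le_norm _
    have h2 : ℓZ ^ 2 ≤ ‖star z ⬝ᵥ y‖ ^ 2 :=
      pow_le_pow_left₀ hℓZ_nonneg h1 2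
    calc ℓZ ^ 2 ≤ ‖star z ⬝ᵥ y‖ ^ 2 := h2
      _ ≤ ℓA * (star (A *ᵥ v) ⬝ᵥ (A *ᵥ v)).re := step1
      _ ≤ ℓA * (ℓB * (star (Z *ᵥ y) ⬝ᵥ (Z *ᵥ y)).re) :=
          mul_le_mul_of_nonneg_left step2 hℓA_nonneg
      _ = ℓA * ℓB * ℓZ := by rw [hZy]; ring
  rcases eq_or_lt_of_le hℓZ_nonneg with h | h
  · rw [← h]; exact mul_nonneg hℓA_nonneg hℓB_nonneg
  · nlinarith [main]
end

section
/- Let X ∈ ℝ^{N₁×⋯×N_d} and for each mode j let P_j denote the orthogonal projector A^{(j)}(A^{(j)})* where A^{(j)} ∈ ℝ^{N_j×R_j} consists of the leading R_j left singular vectors of the mode-j unfolding X_{(j)}. Then the HOSVD approximation X̂ = X ×₁ P₁ ⋯ ×_d P_d satisfies ‖X − X̂‖² ≤ Σ_{j=1}^d ‖X − X ×_j P_j‖², and consequently ‖X − X̂‖ ≤ √d · min{‖X − Y‖ : Y has multilinear rank at most (R₁,...,R_d)}. -/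
open Matrix

/-- Mode-j unfolding of a d-mode tensor. -/
def unfold {d : ℕ} {N : Fin d → ℕ} (X : (∀ l, Fin (N l)) → ℝ) (j : Fin d) :
    Matrix (Fin (N j)) (∀ k : {k : Fin d // k ≠ j}, Fin (N k.1)) ℝ :=
  fun a b => X fun l => if h : l = j then Fin.cast (congrArg N h).symm a else b ⟨l, h⟩

/-- Multi-TTM product. -/
def multiTTM {d : ℕ} {N K : Fin d → ℕ} (X : (∀ l, Fin (N l)) → ℝ)
    (U : ∀ l, Matrix (Fin (K l)) (Fin (N l)) ℝ) : (∀ l, Fin (K l)) → ℝ :=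
  fun i => ∑ x : ∀ l, Fin (N l), X x * ∏ l, U l (i l) (x l)

/-- Mode-j product with a square matrix (dimension preserving). -/
def ttmSq {d : ℕ} {N : Fin d → ℕ} (X : (∀ l, Fin (N l)) → ℝ) (j : Fin d)
    (P : Matrix (Fin (N j)) (Fin (N j)) ℝ) : (∀ l, Fin (N l)) → ℝ :=
  fun i => ∑ t : Fin (N j), X (Function.update i j t) * P (i j) t

/-- Tensor Frobenius norm. -/
noncomputable def frobT {d : ℕ} {N : Fin d → ℕ} (X : (∀ l, Fin (N l)) → ℝ) : ℝ :=
  Real.sqrt (∑ i, X i ^ 2)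

namespace HosvdAux

open Module

variable {d : ℕ} {N : Fin d → ℕ}

/-- Auxiliary inner product on tensors. -/
noncomputable def inn (X Y : (∀ l, Fin (N l)) → ℝ) : ℝ := ∑ i, X i * Y i

lemma inn_comm (X Y : (∀ l, Fin (N l)) → ℝ) : inn X Y = inn Y X := by
  simp [inn, mul_comm]

lemma inn_self_nonneg (X : (∀ l, Fin (N l)) → ℝ) : 0 ≤ inn X X :=
  Finset.sum_nonneg fun i _ => mul_self_nonneg _

lemma inn_add_add (U V : (∀ l, Fin (N l)) → ℝ) :
    inn (U + V) (U + V) = inn U U + 2 * inn U V + inn V V := by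
  simp only [inn, Pi.add_apply, ← Finset.sum_add_distrib, Finset.mul_sum]
  exact Finset.sum_congr rfl fun i _ => by ring

lemma frobT_sq (X : (∀ l, Fin (N l)) → ℝ) : frobT X ^ 2 = inn X X := by
  rw [frobT, Real.sq_sqrt (Finset.sum_nonneg fun i _ => sq_nonneg _)]
  simp [inn, sq]

lemma frobT_nonneg (X : (∀ l, Fin (N l)) → ℝ) : 0 ≤ frobT X := Real.sqrt_nonneg _

lemma ttmSq_sub (X Y : (∀ l, Fin (N l)) → ℝ) (j : Fin d)
    (P : Matrix (Fin (N j)) (Fin (N j)) ℝ) :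
    ttmSq (X - Y) j P = ttmSq X j P - ttmSq Y j P := by
  funext i
  simp [ttmSq, sub_mul, Finset.sum_sub_distrib]

lemma ttmSq_ttmSq (X : (∀ l, Fin (N l)) → ℝ) (j : Fin d)
    (P Q : Matrix (Fin (N j)) (Fin (N j)) ℝ) :
    ttmSq (ttmSq X j P) j Q = ttmSq X j (Q * P) := by
  funext i
  simp only [ttmSq, Function.update_idem, Function.update_self, Matrix.mul_apply,
    Finset.sum_mul, Finset.mul_sum]
  rw [Finset.sum_comm]
  exact Finset.sum_congr rfl fun s _ => Finset.sum_congr rfl fun t _ => by ring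

lemma inn_ttmSq (X Y : (∀ l, Fin (N l)) → ℝ) (j : Fin d)
    (P : Matrix (Fin (N j)) (Fin (N j)) ℝ) :
    inn (ttmSq X j P) Y = inn X (ttmSq Y j Pᵀ) := by
  classical
  have hinv : Function.Involutive
      (fun p : (∀ l, Fin (N l)) × Fin (N j) => (Function.update p.1 j p.2, p.1 j)) := by
    intro p
    simp [Function.update_idem, Function.update_eq_self]
  calc inn (ttmSq X j P) Y
      = ∑ p : (∀ l, Fin (N l)) × Fin (N j),
          X (Function.update p.1 j p.2) * P (p.1 j) p.2 * Y p.1 := by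
        rw [Fintype.sum_prod_type]
        simp [inn, ttmSq, Finset.sum_mul]
    _ = ∑ p : (∀ l, Fin (N l)) × Fin (N j),
          X p.1 * (Y (Function.update p.1 j p.2) * Pᵀ (p.1 j) p.2) := by
        apply Fintype.sum_equiv (hinv.toPerm _)
        intro p
        simp [Function.Involutive.toPerm, Function.update_idem, Function.update_eq_self,
          Matrix.transpose_apply]
        ring
    _ = inn X (ttmSq Y j Pᵀ) := by
        rw [Fintype.sum_prod_type]
        simp [inn, ttmSq, Finset.mul_sum]

lemma inn_proj_add (X : (∀ l, Fin (N l)) → ℝ) (j : Fin d)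
    (P : Matrix (Fin (N j)) (Fin (N j)) ℝ) (hP : P * P = P) (hPt : Pᵀ = P) :
    inn (ttmSq X j P) (ttmSq X j P) + inn (X - ttmSq X j P) (X - ttmSq X j P) = inn X X := by
  have hcross : inn (ttmSq X j P) (X - ttmSq X j P) = 0 := by
    rw [inn_ttmSq, hPt, ttmSq_sub, ttmSq_ttmSq, hP]
    simp [inn]
  have hX : ttmSq X j P + (X - ttmSq X j P) = X := by abel
  conv_rhs => rw [← hX]
  rw [inn_add_add, hcross]
  ring

lemma multiTTM_empty (X : (∀ l, Fin (N l)) → ℝ)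
    (P : ∀ l, Matrix (Fin (N l)) (Fin (N l)) ℝ) :
    multiTTM X (fun l => if l ∈ (∅ : Finset (Fin d)) then P l else 1) = X := by
  funext i
  simp only [multiTTM, Finset.notMem_empty, if_false]
  rw [Fintype.sum_eq_single i]
  · simp [Matrix.one_apply]
  · intro x hx
    obtain ⟨l, hl⟩ : ∃ l, i l ≠ x l := by
      by_contra h
      push_neg at h
      exact hx (funext fun l => (h l).symm)
    rw [Finset.prod_eq_zero (Finset.mem_univ l) (by simp [Matrix.one_apply, hl]), mul_zero]

lemma multiTTM_insert (X : (∀ l, Fin (N l)) → ℝ)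
    (P : ∀ l, Matrix (Fin (N l)) (Fin (N l)) ℝ) {s : Finset (Fin d)} {j : Fin d} (hj : j ∉ s) :
    multiTTM X (fun l => if l ∈ insert j s then P l else 1) =
      ttmSq (multiTTM X (fun l => if l ∈ s then P l else 1)) j (P j) := by
  classical
  funext i
  have key : ∀ x : ∀ l, Fin (N l), ∀ t : Fin (N j),
      (∏ l, (if l ∈ s then P l else 1) (Function.update i j t l) (x l)) =
        (if t = x j then 1 else 0) * ∏ l ∈ {j}ᶜ, (if l ∈ s then P l else 1) (i l) (x l) := by
    intro x t
    rw [Fintype.prod_eq_mul_prod_compl j]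
    congr 1
    · simp [hj, Function.update_self, Matrix.one_apply]
    · apply Finset.prod_congr rfl
      intro l hl
      simp only [Finset.mem_compl, Finset.mem_singleton] at hl
      rw [Function.update_of_ne hl]
  calc multiTTM X (fun l => if l ∈ insert j s then P l else 1) i
      = ∑ x : ∀ l, Fin (N l), X x * ((P j) (i j) (x j) *
          ∏ l ∈ {j}ᶜ, (if l ∈ s then P l else 1) (i l) (x l)) := by
        apply Finset.sum_congr rfl
        intro x _
        congr 1
        rw [Fintype.prod_eq_mul_prod_compl j]
        congr 1
        · simp
        · apply Finset.prod_congr rfl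
          intro l hl
          simp only [Finset.mem_compl, Finset.mem_singleton] at hl
          simp [Finset.mem_insert, hl]
    _ = ∑ t : Fin (N j), (∑ x : ∀ l, Fin (N l), X x *
          ((if t = x j then 1 else 0) * ∏ l ∈ {j}ᶜ, (if l ∈ s then P l else 1) (i l) (x l)))
          * (P j) (i j) t := by
        symm
        calc ∑ t : Fin (N j), (∑ x : ∀ l, Fin (N l), X x *
              ((if t = x j then 1 else 0) * ∏ l ∈ {j}ᶜ, (if l ∈ s then P l else 1) (i l) (x l)))
              * (P j) (i j) t
            = ∑ x : ∀ l, Fin (N l), ∑ t : Fin (N j), X x *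
              ((if t = x j then 1 else 0) * ∏ l ∈ {j}ᶜ, (if l ∈ s then P l else 1) (i l) (x l))
              * (P j) (i j) t := by
              simp only [Finset.sum_mul]
              rw [Finset.sum_comm]
          _ = ∑ x : ∀ l, Fin (N l), X x * ((P j) (i j) (x j) *
              ∏ l ∈ {j}ᶜ, (if l ∈ s then P l else 1) (i l) (x l)) := by
              apply Finset.sum_congr rfl
              intro x _
              simp only [mul_ite, ite_mul, mul_one, mul_zero, zero_mul, one_mul]
              rw [Finset.sum_ite_eq' Finset.univ (x j)]
              simp only [Finset.mem_univ, if_true]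
              ring
    _ = ttmSq (multiTTM X (fun l => if l ∈ s then P l else 1)) j (P j) i := by
        unfold ttmSq multiTTM
        apply Finset.sum_congr rfl
        intro t _
        congr 1
        apply Finset.sum_congr rfl
        intro x _
        rw [key x t]

lemma main_ineq (X : (∀ l, Fin (N l)) → ℝ)
    (P : ∀ l, Matrix (Fin (N l)) (Fin (N l)) ℝ)
    (hP : ∀ l, P l * P l = P l) (hPt : ∀ l, (P l)ᵀ = P l) (s : Finset (Fin d)) :
    inn (X - multiTTM X (fun l => if l ∈ s then P l else 1))
        (X - multiTTM X (fun l => if l ∈ s then P l else 1)) ≤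
      ∑ j ∈ s, inn (X - ttmSq X j (P j)) (X - ttmSq X j (P j)) := by
  classical
  induction s using Finset.induction_on with
  | empty => rw [multiTTM_empty]; simp [inn]
  | @insert j s hj ih =>
    rw [multiTTM_insert X P hj, Finset.sum_insert hj]
    set Z := multiTTM X (fun l => if l ∈ s then P l else 1) with hZ
    have hsplit : X - ttmSq Z j (P j) = (X - ttmSq X j (P j)) + ttmSq (X - Z) j (P j) := by
      rw [ttmSq_sub]; abel
    have hcross : inn (X - ttmSq X j (P j)) (ttmSq (X - Z) j (P j)) = 0 := by
      rw [inn_comm, inn_ttmSq, hPt, ttmSq_sub, ttmSq_ttmSq, hP]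
      simp [inn]
    have hcontr := inn_proj_add (X - Z) j (P j) (hP j) (hPt j)
    have hnn := inn_self_nonneg ((X - Z) - ttmSq (X - Z) j (P j))
    calc inn (X - ttmSq Z j (P j)) (X - ttmSq Z j (P j))
        = inn (X - ttmSq X j (P j)) (X - ttmSq X j (P j))
          + inn (ttmSq (X - Z) j (P j)) (ttmSq (X - Z) j (P j)) := by
          rw [hsplit, inn_add_add, hcross]; ring
      _ ≤ inn (X - ttmSq X j (P j)) (X - ttmSq X j (P j)) + inn (X - Z) (X - Z) := by
          linarith
      _ ≤ inn (X - ttmSq X j (P j)) (X - ttmSq X j (P j))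
          + ∑ k ∈ s, inn (X - ttmSq X k (P k)) (X - ttmSq X k (P k)) := by
          linarith

lemma exists_superspace {K V : Type*} [Field K] [AddCommGroup V] [Module K V]
    [FiniteDimensional K V] (W : Submodule K V) (r : ℕ) (h1 : finrank K W ≤ r)
    (h2 : r ≤ finrank K V) : ∃ W' : Submodule K V, W ≤ W' ∧ finrank K W' = r := by
  obtain ⟨k, hk⟩ : ∃ k, r - finrank K W = k := ⟨_, rfl⟩
  induction k generalizing W with
  | zero => exact ⟨W, le_rfl, by omega⟩
  | succ k ih =>
    have hlt : finrank K W < r := by omega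
    have hlt2 : finrank K W < finrank K V := lt_of_lt_of_le hlt h2
    obtain ⟨x, hx⟩ := Submodule.exists_of_finrank_lt W hlt2
    have hxW : x ∉ W := by simpa using hx 1 one_ne_zero
    have hxne : x ≠ 0 := fun h => hxW (h ▸ W.zero_mem)
    have hd : Disjoint W (K ∙ x) := (Submodule.disjoint_span_singleton).2 fun h => (hxW h).elim
    have hfr : finrank K ((K ∙ x) ⊔ W : Submodule K V) = finrank K W + 1 := by
      have h3 := Submodule.finrank_sup_add_finrank_inf_eq (K ∙ x) W
      rw [(hd.symm).eq_bot, finrank_bot, finrank_span_singleton hxne] at h3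
      omega
    obtain ⟨W', hle, hW'⟩ := ih ((K ∙ x) ⊔ W) (by omega) (by omega)
    exact ⟨W', le_trans le_sup_right hle, hW'⟩

lemma exists_proj_fix {n r : ℕ} {m : Type*} [Fintype m] (M : Matrix (Fin n) m ℝ)
    (hrank : M.rank ≤ r) (hrn : r ≤ n) :
    ∃ B : Matrix (Fin n) (Fin r) ℝ, Bᵀ * B = 1 ∧
      ∀ c a, (∑ t, (B * Bᵀ) a t * M t c) = M a c := by
  classical
  set E := EuclideanSpace ℝ (Fin n) with hE
  set W₀ : Submodule ℝ E := (Submodule.span ℝ (Set.range Mᵀ)).map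
    (WithLp.linearEquiv 2 ℝ (Fin n → ℝ)).symm.toLinearMap with hW₀
  have hfr0 : finrank ℝ W₀ ≤ r := by
    rw [hW₀, LinearEquiv.finrank_map_eq]
    exact le_trans (le_of_eq (Matrix.rank_eq_finrank_span_cols M).symm) hrank
  have hEfin : finrank ℝ E = n := finrank_euclideanSpace_fin
  obtain ⟨W, hle, hfr⟩ := exists_superspace W₀ r hfr0 (by omega)
  let b : OrthonormalBasis (Fin r) ℝ W := (stdOrthonormalBasis ℝ W).reindex (finCongr hfr)
  let B : Matrix (Fin n) (Fin r) ℝ := fun a c => ((b c : E) a)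
  have horth := b.orthonormal
  rw [orthonormal_iff_ite] at horth
  have hBtB : Bᵀ * B = 1 := by
    ext c c'
    have h1 := horth c c'
    rw [Submodule.coe_inner] at h1
    rw [Matrix.mul_apply, Matrix.one_apply]
    simp only [Matrix.transpose_apply]
    rw [← h1, PiLp.inner_apply]
    simp [B, mul_comm]
  refine ⟨B, hBtB, ?_⟩
  have hproj : ∀ v : E, v ∈ W → ∀ a, (∑ t, (B * Bᵀ) a t * v t) = v a := by
    intro v hv a
    have hrepr := b.sum_repr ⟨v, hv⟩
    have hcoe : ∑ c, b.repr ⟨v, hv⟩ c • ((b c : E)) = v := by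
      have := congrArg (Subtype.val) hrepr
      simpa using this
    have hrepr_eq : ∀ c, b.repr ⟨v, hv⟩ c = ∑ t, (b c : E) t * v t := by
      intro c
      rw [b.repr_apply_apply, Submodule.coe_inner, PiLp.inner_apply]
      simp [mul_comm]
    calc ∑ t, (B * Bᵀ) a t * v t
        = ∑ t, (∑ c, B a c * B t c) * v t := by
          simp [Matrix.mul_apply, Matrix.transpose_apply]
      _ = ∑ c, (∑ t, (b c : E) t * v t) * (b c : E) a := by
          simp only [Finset.sum_mul]
          rw [Finset.sum_comm]
          apply Finset.sum_congr rfl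
          intro c _
          apply Finset.sum_congr rfl
          intro t _
          simp only [B]
          ring
      _ = v a := by
          have happ : ∀ (f : Fin r → E), (∑ c, f c) a = ∑ c, f c a := by
            intro f
            induction (Finset.univ : Finset (Fin r)) using Finset.induction_on with
            | empty => simp
            | insert _ _ hj ih =>
              rw [Finset.sum_insert hj, Finset.sum_insert hj, ← ih, PiLp.add_apply]
          conv_rhs => rw [← hcoe]
          rw [happ]
          apply Finset.sum_congr rfl
          intro c _
          rw [hrepr_eq c, PiLp.smul_apply, smul_eq_mul]
  intro c a
  exact hproj _ (hle (Submodule.mem_map_of_mem (Submodule.subset_span (Set.mem_range_self c)))) a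

lemma unfold_col (Y : (∀ l, Fin (N l)) → ℝ) (j : Fin d) (i : ∀ l, Fin (N l)) (t : Fin (N j)) :
    unfold Y j t (fun k => i k.1) = Y (Function.update i j t) := by
  show Y _ = Y _
  congr 1
  funext l
  by_cases h : l = j
  · subst h
    simp [Function.update_self]
  · simp [h, Function.update_of_ne h]

lemma ttmSq_fix (Y : (∀ l, Fin (N l)) → ℝ) (j : Fin d)
    (Q : Matrix (Fin (N j)) (Fin (N j)) ℝ)
    (hQ : ∀ c a, (∑ t, Q a t * unfold Y j t c) = unfold Y j a c) :
    ttmSq Y j Q = Y := by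
  funext i
  have h := hQ (fun k => i k.1) (i j)
  calc ttmSq Y j Q i = ∑ t, Q (i j) t * unfold Y j t (fun k => i k.1) := by
        apply Finset.sum_congr rfl
        intro t _
        rw [unfold_col]
        ring
    _ = unfold Y j (i j) (fun k => i k.1) := h
    _ = Y i := by rw [unfold_col, Function.update_eq_self]

lemma R_le_N {n r : ℕ} (A : Matrix (Fin n) (Fin r) ℝ) (h : Aᵀ * A = 1) : r ≤ n := by
  have h1 : (1 : Matrix (Fin r) (Fin r) ℝ).rank = r := by
    rw [Matrix.rank_one, Fintype.card_fin]
  have h2 := Matrix.rank_mul_le_right Aᵀ A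
  have h3 := A.rank_le_card_height
  rw [h, h1, Fintype.card_fin] at *
  omega

end HosvdAux

open HosvdAux

/-- Quasi-optimality of the truncated HOSVD: the projectors P_j = A^{(j)}(A^{(j)})*
    built from the leading R_j left singular vectors of the mode-j unfoldings (here
    characterized by mode-wise optimality among all rank-R_j orthogonal projections)
    satisfy ‖X − X̂‖² ≤ Σ_j ‖X − X ×_j P_j‖², hence ‖X − X̂‖ ≤ √d · min over
    tensors of multilinear rank at most (R₁,…,R_d). -/
theorem hosvd_quasi_optimal {d : ℕ} {N R : Fin d → ℕ}
    (X : (∀ l, Fin (N l)) → ℝ)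
    (A : ∀ j, Matrix (Fin (N j)) (Fin (R j)) ℝ)
    (hA : ∀ j, (A j)ᵀ * A j = 1)
    (hopt : ∀ (j : Fin d) (B : Matrix (Fin (N j)) (Fin (R j)) ℝ), Bᵀ * B = 1 →
      frobT (X - ttmSq X j (A j * (A j)ᵀ)) ≤ frobT (X - ttmSq X j (B * Bᵀ)))
    (Xhat : (∀ l, Fin (N l)) → ℝ)
    (hXhat : Xhat = multiTTM X fun j => A j * (A j)ᵀ) :
    frobT (X - Xhat) ^ 2 ≤ ∑ j, frobT (X - ttmSq X j (A j * (A j)ᵀ)) ^ 2 ∧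
      ∀ Y : (∀ l, Fin (N l)) → ℝ, (∀ j, (unfold Y j).rank ≤ R j) →
        frobT (X - Xhat) ≤ Real.sqrt d * frobT (X - Y) := by
  classical
  set P : ∀ l, Matrix (Fin (N l)) (Fin (N l)) ℝ := fun j => A j * (A j)ᵀ with hPdef
  have hPt : ∀ l, (P l)ᵀ = P l := by
    intro l
    simp [hPdef, Matrix.transpose_mul, Matrix.transpose_transpose]
  have hPP : ∀ l, P l * P l = P l := by
    intro l
    show A l * (A l)ᵀ * (A l * (A l)ᵀ) = A l * (A l)ᵀ
    rw [Matrix.mul_assoc, ← Matrix.mul_assoc (A l)ᵀ (A l) (A l)ᵀ, hA l, Matrix.one_mul]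
  have huniv : (fun l => if l ∈ (Finset.univ : Finset (Fin d)) then P l else 1) = P := by
    funext l
    simp
  have hmain := main_ineq X P hPP hPt Finset.univ
  rw [huniv] at hmain
  have hpart1 : frobT (X - Xhat) ^ 2 ≤ ∑ j, frobT (X - ttmSq X j (A j * (A j)ᵀ)) ^ 2 := by
    rw [hXhat]
    simp only [frobT_sq]
    exact hmain
  refine ⟨hpart1, ?_⟩
  intro Y hY
  have hsq : ∀ j, frobT (X - ttmSq X j (A j * (A j)ᵀ)) ^ 2 ≤ frobT (X - Y) ^ 2 := by
    intro j
    obtain ⟨B, hB, hBfix⟩ := exists_proj_fix (unfold Y j) (hY j) (R_le_N (A j) (hA j))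
    have hQt : (B * Bᵀ)ᵀ = B * Bᵀ := by
      simp [Matrix.transpose_mul, Matrix.transpose_transpose]
    have hQQ : (B * Bᵀ) * (B * Bᵀ) = B * Bᵀ := by
      rw [Matrix.mul_assoc, ← Matrix.mul_assoc Bᵀ B Bᵀ, hB, Matrix.one_mul]
    have hfix : ttmSq Y j (B * Bᵀ) = Y := ttmSq_fix Y j (B * Bᵀ) hBfix
    have h2 : frobT (X - ttmSq X j (B * Bᵀ)) ^ 2 ≤ frobT (X - Y) ^ 2 := by
      rw [frobT_sq, frobT_sq]
      have hkey : X - ttmSq X j (B * Bᵀ) = (X - Y) - ttmSq (X - Y) j (B * Bᵀ) := by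
        rw [ttmSq_sub, hfix]; abel
      rw [hkey]
      have hp := inn_proj_add (X - Y) j (B * Bᵀ) hQQ hQt
      have hnn := inn_self_nonneg (ttmSq (X - Y) j (B * Bᵀ))
      linarith
    exact le_trans (pow_le_pow_left₀ (frobT_nonneg _) (hopt j B hB) 2) h2
  have hd : frobT (X - Xhat) ^ 2 ≤ (d : ℝ) * frobT (X - Y) ^ 2 := by
    calc frobT (X - Xhat) ^ 2 ≤ ∑ j, frobT (X - ttmSq X j (A j * (A j)ᵀ)) ^ 2 := hpart1
      _ ≤ ∑ _j : Fin d, frobT (X - Y) ^ 2 := Finset.sum_le_sum fun j _ => hsq j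
      _ = (d : ℝ) * frobT (X - Y) ^ 2 := by
        rw [Finset.sum_const, Finset.card_univ, Fintype.card_fin, nsmul_eq_mul]
  have hd2 : frobT (X - Xhat) ^ 2 ≤ (Real.sqrt d * frobT (X - Y)) ^ 2 := by
    rw [mul_pow, Real.sq_sqrt (Nat.cast_nonneg d)]
    exact hd
  have := Real.sqrt_le_sqrt hd2
  rwa [Real.sqrt_sq (frobT_nonneg _), Real.sqrt_sq (mul_nonneg (Real.sqrt_nonneg _) (frobT_nonneg _))] at this
end
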